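/- arXiv:2201.01252 — 2 statements merged into one kernel-verified Lean document; each statement's English description precedes it below -/
import Mathlib

section
/- Let G be a simple connected graph with minimum degree d_min and maximum degree d_max. Then for every vertex v_i, 1/d_max ≤ 𝓛E_G(v_i) ≤ 1/√(d_min). -/
open Matrix BigOperators Finset

/-- The absolute value of a real matrix `B`, defined as `(B * Bᵀ)^(1/2)`. -/
noncomputable def matAbs {n : ℕ} (B : Matrix (Fin n) (Fin n) ℝ) : Matrix (Fin n) (Fin n) ℝ :=
  let hA : (B * Bᵀ).PosSemidef := Matrix.conjTranspose_eq_transpose_of_trivial B ▸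
    Matrix.posSemidef_self_mul_conjTranspose B
  hA.1.eigenvectorUnitary.1 * Matrix.diagonal ((↑) ∘ (√·) ∘ hA.1.eigenvalues) *
    (star hA.1.eigenvectorUnitary : Matrix (Fin n) (Fin n) ℝ)

/-- The (adjacency) energy of the vertex `i` of the graph `G`: `|A|_{ii}`. -/
noncomputable def vertexEnergy {n : ℕ} (G : SimpleGraph (Fin n)) [DecidableRel G.Adj]
    (i : Fin n) : ℝ :=
  matAbs (G.adjMatrix ℝ) i i

/-- The Laplacian energy of the vertex `i` of the graph `G`: `(|L - (2m/n) I|)_{ii}`. -/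
noncomputable def vertexLapEnergy {n : ℕ} (G : SimpleGraph (Fin n)) [DecidableRel G.Adj]
    (i : Fin n) : ℝ :=
  matAbs (G.lapMatrix ℝ - ((2 * (G.edgeFinset.card : ℝ)) / n) • 1) i i

/-- The normalized Laplacian `𝓛 = I - D^{-1/2} A D^{-1/2}` of the graph `G`. -/
noncomputable def normLap {n : ℕ} (G : SimpleGraph (Fin n)) [DecidableRel G.Adj] :
    Matrix (Fin n) (Fin n) ℝ :=
  1 - Matrix.diagonal (fun i => (Real.sqrt (G.degree i))⁻¹) * G.adjMatrix ℝ *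
      Matrix.diagonal (fun i => (Real.sqrt (G.degree i))⁻¹)

/-- The normalized Laplacian energy of the vertex `i` of the graph `G`: `(|𝓛 - I|)_{ii}`. -/
noncomputable def vertexNormLapEnergy {n : ℕ} (G : SimpleGraph (Fin n)) [DecidableRel G.Adj]
    (i : Fin n) : ℝ :=
  matAbs (normLap G - 1) i i

open scoped MatrixOrder

lemma matAbs_eq {n : ℕ} (B : Matrix (Fin n) (Fin n) ℝ) : matAbs B = CFC.sqrt (B * Bᵀ) := by
  have hA : (B * Bᵀ).PosSemidef := Matrix.conjTranspose_eq_transpose_of_trivial B ▸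
    Matrix.posSemidef_self_mul_conjTranspose B
  rw [CFC.sqrt_eq_cfc, cfc_nnreal_eq_real _ (B * Bᵀ) hA.nonneg, hA.1.cfc_eq, Matrix.IsHermitian.cfc, Unitary.conjStarAlgAut_apply]
  unfold matAbs
  congr 3
  funext k
  simp only [Function.comp_apply, Real.coe_sqrt, Real.coe_toNNReal', RCLike.ofReal_real_eq_id, id,
    max_eq_left (hA.eigenvalues_nonneg k)]

lemma psd_diag_nonneg {n : ℕ} {M : Matrix (Fin n) (Fin n) ℝ} (h : M.PosSemidef) (i : Fin n) :
    0 ≤ M i i := by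
  exact h.diag_nonneg

lemma psd_symm_apply {n : ℕ} {M : Matrix (Fin n) (Fin n) ℝ} (h : M.PosSemidef) (a b : Fin n) :
    M a b = M b a := by
  have := h.1
  rw [Matrix.IsHermitian, Matrix.conjTranspose_eq_transpose_of_trivial] at this
  have h2 := congrFun (congrFun this b) a
  simpa using h2

lemma sqrt_diag_le_sqrt {n : ℕ} {M : Matrix (Fin n) (Fin n) ℝ} (h : M.PosSemidef) (i : Fin n) :
    CFC.sqrt M i i ≤ Real.sqrt (M i i) := by
  have hS := (CFC.sqrt_nonneg M).posSemidef
  have key : CFC.sqrt M i i ^ 2 ≤ M i i := by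
    conv_rhs => rw [← CFC.sqrt_mul_sqrt_self M h.nonneg]
    rw [Matrix.mul_apply]
    calc CFC.sqrt M i i ^ 2 ≤ ∑ j, CFC.sqrt M i j ^ 2 :=
          Finset.single_le_sum (f := fun j => CFC.sqrt M i j ^ 2) (fun j _ => sq_nonneg _)
            (Finset.mem_univ i)
      _ = ∑ j, CFC.sqrt M i j * CFC.sqrt M j i := by
          refine Finset.sum_congr rfl fun j _ => ?_
          rw [sq, psd_symm_apply hS i j]
  exact (Real.le_sqrt (psd_diag_nonneg hS i) (le_trans (sq_nonneg _) key)).mpr key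

lemma diag_le_sqrt_diag {n : ℕ} {N M : Matrix (Fin n) (Fin n) ℝ} (hN : N.IsHermitian)
    (h1 : (1 - N).PosSemidef) (h2 : (1 + N).PosSemidef)
    (hMeq : M = N * N) (hM : M.PosSemidef) (i : Fin n) :
    M i i ≤ CFC.sqrt M i i := by
  set U : Matrix (Fin n) (Fin n) ℝ := (hN.eigenvectorUnitary : Matrix (Fin n) (Fin n) ℝ) with hU
  set lam : Fin n → ℝ := hN.eigenvalues with hlamdef
  have hUU : star U * U = 1 := Matrix.mem_unitaryGroup_iff'.mp hN.eigenvectorUnitary.2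
  have hspec : N = U * Matrix.diagonal lam * star U := by
    have := hN.spectral_theorem
    rw [Unitary.conjStarAlgAut_apply] at this
    exact this
  have hlam : ∀ k, |lam k| ≤ 1 := by
    intro k
    set v : Fin n → ℝ := ⇑(hN.eigenvectorBasis k) with hv
    have hveq : N *ᵥ v = lam k • v := hN.mulVec_eigenvectorBasis k
    have hvv : v ⬝ᵥ v = 1 := by
      have hnorm := hN.eigenvectorBasis.orthonormal.1 k
      have h5 : (inner ℝ (hN.eigenvectorBasis k) (hN.eigenvectorBasis k) : ℝ) = 1 := by
        rw [real_inner_self_eq_norm_sq, hnorm]; norm_num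
      rw [EuclideanSpace.inner_eq_star_dotProduct] at h5
      simpa using h5
    have hb1 := h1.dotProduct_mulVec_nonneg v
    have hb2 := h2.dotProduct_mulVec_nonneg v
    rw [star_trivial, Matrix.sub_mulVec, Matrix.one_mulVec, dotProduct_sub, hveq,
      dotProduct_smul, hvv, smul_eq_mul, mul_one] at hb1
    rw [star_trivial, Matrix.add_mulVec, Matrix.one_mulVec, dotProduct_add, hveq,
      dotProduct_smul, hvv, smul_eq_mul, mul_one] at hb2
    rw [abs_le]
    constructor <;> linarith
  have hmul : ∀ g h : Fin n → ℝ,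
      (U * Matrix.diagonal g * star U) * (U * Matrix.diagonal h * star U) =
      U * Matrix.diagonal (fun k => g k * h k) * star U := by
    intro g h
    have h3 : star U * (U * (Matrix.diagonal h * star U)) = Matrix.diagonal h * star U := by
      rw [← Matrix.mul_assoc, hUU, Matrix.one_mul]
    simp only [Matrix.mul_assoc, h3]
    rw [← Matrix.mul_assoc (Matrix.diagonal g), Matrix.diagonal_mul_diagonal]
  set S : Matrix (Fin n) (Fin n) ℝ := U * Matrix.diagonal (fun k => |lam k|) * star U with hSdef
  have hSpsd : S.PosSemidef := by
    rw [hSdef, Matrix.star_eq_conjTranspose]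
    exact (Matrix.PosSemidef.diagonal (fun k => abs_nonneg _)).mul_mul_conjTranspose_same U
  have hSS : S * S = M := by
    rw [hSdef, hmul, hMeq]
    conv_rhs => rw [hspec]
    rw [hmul]
    have h6 : (fun k => |lam k| * |lam k|) = fun k => lam k * lam k :=
      funext fun k => abs_mul_abs_self _
    rw [h6]
  have hSsqrt : CFC.sqrt M = S := CFC.sqrt_unique hSS hSpsd.nonneg
  have hdiff : (S - M).PosSemidef := by
    have : S - M = U * Matrix.diagonal (fun k => |lam k| - lam k * lam k) * star U := by
      rw [hMeq]
      conv_lhs => rw [hspec, hmul, hSdef]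
      rw [← Matrix.sub_mul, ← Matrix.mul_sub, Matrix.diagonal_sub]
    rw [this, Matrix.star_eq_conjTranspose]
    refine (Matrix.PosSemidef.diagonal fun k => ?_).mul_mul_conjTranspose_same U
    simp only [Pi.zero_apply]
    nlinarith [abs_nonneg (lam k), hlam k, abs_mul_abs_self (lam k)]
  have := psd_diag_nonneg hdiff i
  rw [Matrix.sub_apply] at this
  rw [hSsqrt]
  linarith

lemma signless_quadform {n : ℕ} (G : SimpleGraph (Fin n)) [DecidableRel G.Adj] (x : Fin n → ℝ) :
    x ⬝ᵥ ((G.degMatrix ℝ + G.adjMatrix ℝ) *ᵥ x) =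
      (∑ i : Fin n, ∑ j : Fin n, if G.Adj i j then (x i + x j) ^ 2 else 0) / 2 := by
  simp_rw [Matrix.add_mulVec, dotProduct_add, SimpleGraph.dotProduct_mulVec_degMatrix,
    SimpleGraph.dotProduct_mulVec_adjMatrix, ← Finset.sum_add_distrib,
    SimpleGraph.degree_eq_sum_if_adj, Finset.sum_mul, ite_mul, one_mul, zero_mul,
    ← Finset.sum_add_distrib, ite_add_ite, add_zero]
  rw [← add_self_div_two (∑ _i : Fin n, ∑ _j : Fin n, _)]
  conv_lhs => enter [1, 2, 2, i, 2, j]; rw [if_congr (SimpleGraph.adj_comm G i j) rfl rfl]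
  conv_lhs => enter [1, 2]; rw [Finset.sum_comm]
  simp_rw [← Finset.sum_add_distrib, ite_add_ite]
  congr 2 with i
  congr 2 with j
  ring_nf

lemma signless_posSemidef {n : ℕ} (G : SimpleGraph (Fin n)) [DecidableRel G.Adj] :
    (G.degMatrix ℝ + G.adjMatrix ℝ).PosSemidef := by
  rw [Matrix.posSemidef_iff_dotProduct_mulVec]
  constructor
  · rw [Matrix.IsHermitian, Matrix.conjTranspose_eq_transpose_of_trivial]
    exact ((G.isSymm_degMatrix ℝ).add G.isSymm_adjMatrix)
  · intro x
    rw [star_trivial, signless_quadform]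
    positivity

theorem stmt14 {n : ℕ} (G : SimpleGraph (Fin n)) [DecidableRel G.Adj]
    (hconn : G.Connected) (i : Fin n) :
    1 / (G.maxDegree : ℝ) ≤ vertexNormLapEnergy G i ∧
      vertexNormLapEnergy G i ≤ 1 / Real.sqrt (G.minDegree : ℝ) := by
  classical
  set f : Fin n → ℝ := fun j => (Real.sqrt (G.degree j))⁻¹ with hf
  set F : Matrix (Fin n) (Fin n) ℝ := Matrix.diagonal f with hFdef
  set N : Matrix (Fin n) (Fin n) ℝ := F * G.adjMatrix ℝ * F with hNdef
  have hBeq : normLap G - 1 = -N := by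
    rw [normLap, hNdef, hFdef, hf]
    abel
  have hNsymm : Nᵀ = N := by
    rw [hNdef, hFdef]
    simp [Matrix.transpose_mul, Matrix.diagonal_transpose, Matrix.mul_assoc]
  have hNherm : N.IsHermitian := by
    rw [Matrix.IsHermitian, Matrix.conjTranspose_eq_transpose_of_trivial]
    exact hNsymm
  have hBBT : (normLap G - 1) * (normLap G - 1)ᵀ = N * N := by
    rw [hBeq, Matrix.transpose_neg, hNsymm, neg_mul_neg]
  have hMpsd : ((normLap G - 1) * (normLap G - 1)ᵀ).PosSemidef :=
    (Matrix.conjTranspose_eq_transpose_of_trivial (normLap G - 1) ▸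
      Matrix.posSemidef_self_mul_conjTranspose (normLap G - 1) :
      ((normLap G - 1) * (normLap G - 1)ᵀ).PosSemidef)
  have hE : vertexNormLapEnergy G i =
      (CFC.sqrt ((normLap G - 1) * (normLap G - 1)ᵀ) : Matrix (Fin n) (Fin n) ℝ) i i := by
    rw [vertexNormLapEnergy, matAbs_eq]
  have hNapp : ∀ a b, N a b = if G.Adj a b then f a * f b else 0 := by
    intro a b
    rw [hNdef, hFdef]
    rw [Matrix.mul_diagonal, Matrix.diagonal_mul, SimpleGraph.adjMatrix_apply]
    split <;> ring
  have hff : ∀ a : Fin n, f a * f a = ((G.degree a : ℝ))⁻¹ := by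
    intro a
    rw [hf, ← mul_inv, Real.mul_self_sqrt (by positivity)]
  have hMii : (N * N) i i = ∑ j ∈ G.neighborFinset i,
      ((G.degree i : ℝ))⁻¹ * ((G.degree j : ℝ))⁻¹ := by
    rw [Matrix.mul_apply]
    have hterm : ∀ j, N i j * N j i =
        if G.Adj i j then ((G.degree i : ℝ))⁻¹ * ((G.degree j : ℝ))⁻¹ else 0 := by
      intro j
      rw [hNapp i j, hNapp j i]
      by_cases h : G.Adj i j
      · rw [if_pos h, if_pos h.symm, if_pos h, ← hff i, ← hff j]
        ring
      · rw [if_neg h, if_neg (fun hc => h hc.symm), if_neg h, mul_zero]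
    simp_rw [hterm]
    rw [← Finset.sum_filter]
    congr 1
    ext j
    simp [SimpleGraph.mem_neighborFinset]
  by_cases hn : 1 < n
  · have hdegpos : ∀ v : Fin n, 0 < G.degree v := by
      intro v
      rw [SimpleGraph.degree_pos_iff_exists_adj]
      haveI hnt : Nontrivial (Fin n) := Fin.nontrivial_iff_two_le.mpr hn
      obtain ⟨w, hw⟩ := exists_ne v
      obtain ⟨p⟩ := hconn.preconnected v w
      have hnnil : ¬ p.Nil := SimpleGraph.Walk.not_nil_of_ne (Ne.symm hw)
      obtain ⟨u, hadj, -, -⟩ := SimpleGraph.Walk.not_nil_iff.mp hnnil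
      exact ⟨u, hadj⟩
    have hdpos : ∀ v : Fin n, (0:ℝ) < (G.degree v : ℝ) := fun v => by exact_mod_cast hdegpos v
    have hFDF : F * G.degMatrix ℝ * F = 1 := by
      rw [hFdef, SimpleGraph.degMatrix, Matrix.diagonal_mul_diagonal,
        Matrix.diagonal_mul_diagonal, ← Matrix.diagonal_one]
      refine congrArg Matrix.diagonal ?_
      funext v
      calc f v * (G.degree v : ℝ) * f v = (G.degree v : ℝ) * (f v * f v) := by ring
        _ = (G.degree v : ℝ) * ((G.degree v : ℝ))⁻¹ := by rw [hff]
        _ = 1 := mul_inv_cancel₀ (hdpos v).ne'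
    have hFH : Fᴴ = F := by
      rw [hFdef]
      simp [Matrix.conjTranspose_eq_transpose_of_trivial, Matrix.diagonal_transpose]
    have h1psd : (1 - N).PosSemidef := by
      have heq : 1 - N = F * G.lapMatrix ℝ * Fᴴ := by
        rw [hFH, SimpleGraph.lapMatrix, Matrix.mul_sub, Matrix.sub_mul, hFDF, hNdef]
      rw [heq]
      exact (SimpleGraph.posSemidef_lapMatrix ℝ G).mul_mul_conjTranspose_same F
    have h2psd : (1 + N).PosSemidef := by
      have heq : 1 + N = F * (G.degMatrix ℝ + G.adjMatrix ℝ) * Fᴴ := by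
        rw [hFH, Matrix.mul_add, Matrix.add_mul, hFDF, hNdef]
      rw [heq]
      exact (signless_posSemidef G).mul_mul_conjTranspose_same F
    have hlow := diag_le_sqrt_diag hNherm h1psd h2psd hBBT hMpsd i
    have hup := sqrt_diag_le_sqrt hMpsd i
    have hMval : ((normLap G - 1) * (normLap G - 1)ᵀ : Matrix (Fin n) (Fin n) ℝ) i i =
        ∑ j ∈ G.neighborFinset i, ((G.degree i:ℝ))⁻¹ * ((G.degree j:ℝ))⁻¹ := by
      rw [hBBT, hMii]
    rw [hMval] at hlow hup
    have hcard : (G.neighborFinset i).card = G.degree i := G.card_neighborFinset_eq_degree i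
    have hdmaxpos : (0:ℝ) < (G.maxDegree : ℝ) := by
      exact_mod_cast lt_of_lt_of_le (hdegpos i) (G.degree_le_maxDegree i)
    have hsum_lb : ((G.maxDegree : ℝ))⁻¹ ≤
        ∑ j ∈ G.neighborFinset i, ((G.degree i:ℝ))⁻¹ * ((G.degree j:ℝ))⁻¹ := by
      have hstep : ∀ j ∈ G.neighborFinset i, ((G.degree i:ℝ))⁻¹ * ((G.maxDegree:ℝ))⁻¹ ≤
          ((G.degree i:ℝ))⁻¹ * ((G.degree j:ℝ))⁻¹ := by
        intro j _
        refine mul_le_mul_of_nonneg_left ?_ (by positivity)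
        refine inv_anti₀ (hdpos j) ?_
        exact_mod_cast G.degree_le_maxDegree j
      have hks := Finset.card_nsmul_le_sum (G.neighborFinset i) _ _ hstep
      rw [hcard, nsmul_eq_mul] at hks
      calc ((G.maxDegree : ℝ))⁻¹
          = (G.degree i : ℝ) * (((G.degree i:ℝ))⁻¹ * ((G.maxDegree:ℝ))⁻¹) := by
            rw [← mul_assoc, mul_inv_cancel₀ (hdpos i).ne', one_mul]
        _ ≤ _ := hks
    haveI : Nonempty (Fin n) := ⟨i⟩
    have hdminpos : (0:ℝ) < (G.minDegree : ℝ) := by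
      obtain ⟨v, hv⟩ := G.exists_minimal_degree_vertex
      rw [hv]; exact_mod_cast hdegpos v
    have hsum_ub : ∑ j ∈ G.neighborFinset i, ((G.degree i:ℝ))⁻¹ * ((G.degree j:ℝ))⁻¹ ≤
        ((G.minDegree : ℝ))⁻¹ := by
      have hstep : ∀ j ∈ G.neighborFinset i, ((G.degree i:ℝ))⁻¹ * ((G.degree j:ℝ))⁻¹ ≤
          ((G.degree i:ℝ))⁻¹ * ((G.minDegree:ℝ))⁻¹ := by
        intro j _
        refine mul_le_mul_of_nonneg_left ?_ (by positivity)
        refine inv_anti₀ hdminpos ?_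
        exact_mod_cast G.minDegree_le_degree j
      have hks := Finset.sum_le_card_nsmul (G.neighborFinset i) _ _ hstep
      rw [hcard, nsmul_eq_mul] at hks
      calc _ ≤ (G.degree i : ℝ) * (((G.degree i:ℝ))⁻¹ * ((G.minDegree:ℝ))⁻¹) := hks
        _ = ((G.minDegree:ℝ))⁻¹ := by
            rw [← mul_assoc, mul_inv_cancel₀ (hdpos i).ne', one_mul]
    constructor
    · rw [hE, one_div]
      exact le_trans hsum_lb hlow
    · rw [hE, one_div, ← Real.sqrt_inv]
      exact le_trans hup (Real.sqrt_le_sqrt hsum_ub)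
  · have hn1 : n = 1 := by
      have := i.pos
      omega
    subst hn1
    have hnoadj : ∀ a b : Fin 1, ¬ G.Adj a b := by
      intro a b h
      exact G.ne_of_adj h (Subsingleton.elim a b)
    have hnbempty : G.neighborFinset i = ∅ := by
      rw [Finset.eq_empty_iff_forall_notMem]
      intro a ha; exact hnoadj i a ((G.mem_neighborFinset i a).mp ha)
    have hmax0 : G.maxDegree = 0 := by
      refine Nat.le_zero.mp (G.maxDegree_le_of_forall_degree_le 0 fun v => ?_)
      have hv : G.neighborFinset v = ∅ := by
        rw [Finset.eq_empty_iff_forall_notMem]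
        intro a ha; exact hnoadj v a ((G.mem_neighborFinset v a).mp ha)
      rw [← SimpleGraph.card_neighborFinset_eq_degree, hv, Finset.card_empty]
    constructor
    · rw [hE]
      have : (G.maxDegree : ℝ) = 0 := by
        rw [hmax0]; norm_num
      rw [this, div_zero]
      exact psd_diag_nonneg (CFC.sqrt_nonneg _).posSemidef i
    · have hup := sqrt_diag_le_sqrt hMpsd i
      have hMval : ((normLap G - 1) * (normLap G - 1)ᵀ : Matrix (Fin 1) (Fin 1) ℝ) i i = 0 := by
        rw [hBBT, hMii, hnbempty, Finset.sum_empty]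
      rw [hMval, Real.sqrt_zero] at hup
      rw [hE]
      refine le_trans hup ?_
      positivity
end

section
/- Let G be a simple connected graph. Then the normalized Laplacian energy of G satisfies 𝓛E(G) ≥ 2·R_{−1}(G), where R_{−1}(G) = Σ_{{v_i,v_j}∈E} 1/(d_i d_j). -/
open Matrix BigOperators Finset

/-- The normalized Laplacian energy of the graph `G`: `tr(|𝓛 - I|)`. -/
noncomputable def normLapEnergy {n : ℕ} (G : SimpleGraph (Fin n)) [DecidableRel G.Adj] : ℝ :=
  (matAbs (normLap G - 1)).trace

/-- The Randić index `R_{-1}(G) = Σ_{{v_i,v_j} ∈ E} 1/(d_i d_j)`. -/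
noncomputable def randicOne {n : ℕ} (G : SimpleGraph (Fin n)) [DecidableRel G.Adj] : ℝ :=
  ∑ e ∈ G.edgeFinset,
    Sym2.lift ⟨fun i j => 1 / ((G.degree i : ℝ) * (G.degree j : ℝ)),
      fun i j => by simp [mul_comm]⟩ e


namespace Stmt16Aux

variable {n : ℕ} (G : SimpleGraph (Fin n)) [DecidableRel G.Adj]

/-- scale vector -/
noncomputable def sdeg (G : SimpleGraph (Fin n)) [DecidableRel G.Adj] (i : Fin n) : ℝ :=
  (Real.sqrt (G.degree i))⁻¹

noncomputable def Bmat (G : SimpleGraph (Fin n)) [DecidableRel G.Adj] :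
    Matrix (Fin n) (Fin n) ℝ :=
  Matrix.diagonal (sdeg G) * G.adjMatrix ℝ * Matrix.diagonal (sdeg G)

lemma Bmat_transpose : (Bmat G)ᵀ = Bmat G := by
  simp [Bmat, Matrix.transpose_mul, Matrix.diagonal_transpose, Matrix.mul_assoc]

lemma Bmat_isHermitian : (Bmat G).IsHermitian := by
  rw [Matrix.IsHermitian, Matrix.conjTranspose_eq_transpose_of_trivial, Bmat_transpose]

lemma Bmat_apply (i j : Fin n) :
    Bmat G i j = sdeg G i * (G.adjMatrix ℝ) i j * sdeg G j := by
  rw [Bmat, Matrix.mul_diagonal, Matrix.diagonal_mul]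

lemma sdeg_sq (i : Fin n) : sdeg G i ^ 2 = ((G.degree i : ℝ))⁻¹ := by
  rw [sdeg, inv_pow, Real.sq_sqrt (by positivity)]

lemma deg_sdeg_sq_le_one (i : Fin n) : (G.degree i : ℝ) * sdeg G i ^ 2 ≤ 1 := by
  rw [sdeg_sq]
  rcases eq_or_ne (G.degree i : ℝ) 0 with h | h
  · simp [h]
  · rw [mul_inv_cancel₀ h]

lemma quad_Bmat (x : Fin n → ℝ) :
    x ⬝ᵥ (Bmat G *ᵥ x) = (fun i => sdeg G i * x i) ⬝ᵥ (G.adjMatrix ℝ *ᵥ fun i => sdeg G i * x i) := by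
  have hd : ∀ z : Fin n → ℝ, Matrix.diagonal (sdeg G) *ᵥ z = fun i => sdeg G i * z i := by
    intro z; ext i; rw [Matrix.mulVec_diagonal]
  rw [Bmat, ← Matrix.mulVec_mulVec, ← Matrix.mulVec_mulVec, hd]
  simp only [dotProduct, hd]
  exact Finset.sum_congr rfl fun i _ => by ring

lemma signless_quad (x : Fin n → ℝ) :
    x ⬝ᵥ ((G.degMatrix ℝ + G.adjMatrix ℝ) *ᵥ x) =
      (∑ i, ∑ j, if G.Adj i j then (x i + x j)^2 else 0)/2 := by
  simp_rw [add_mulVec, dotProduct_add, SimpleGraph.dotProduct_mulVec_degMatrix,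
    SimpleGraph.dotProduct_mulVec_adjMatrix, SimpleGraph.degree_eq_sum_if_adj,
    sum_mul, ite_mul, one_mul, zero_mul, ← sum_add_distrib, ite_add_ite, add_zero]
  rw [← add_self_div_two (∑ i : Fin n, ∑ j : Fin n, _)]
  conv_lhs => enter [1, 2, 2, i, 2, j]; rw [if_congr (G.adj_comm i j) rfl rfl]
  conv_lhs => enter [1, 2]; rw [Finset.sum_comm]
  simp_rw [← sum_add_distrib, ite_add_ite]
  congr 2 with i
  congr 2 with j
  ring_nf

lemma posSemidef_signless : (G.degMatrix ℝ + G.adjMatrix ℝ).PosSemidef := by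
  refine Matrix.PosSemidef.of_dotProduct_mulVec_nonneg ?_ ?_
  · rw [Matrix.IsHermitian, Matrix.conjTranspose_eq_transpose_of_trivial]
    exact ((G.isSymm_degMatrix (R := ℝ)).add (G.isSymm_adjMatrix (α := ℝ)))
  · intro x
    rw [star_trivial, signless_quad]
    positivity

lemma diag_split (x : Fin n → ℝ) :
    x ⬝ᵥ x - ∑ i, (G.degree i : ℝ) * (sdeg G i * x i) * (sdeg G i * x i)
      = ∑ i, (1 - (G.degree i : ℝ) * sdeg G i ^ 2) * x i ^ 2 := by
  rw [dotProduct, ← Finset.sum_sub_distrib]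
  exact Finset.sum_congr rfl fun i _ => by ring

lemma diag_split_nonneg (x : Fin n → ℝ) :
    0 ≤ ∑ i, (1 - (G.degree i : ℝ) * sdeg G i ^ 2) * x i ^ 2 :=
  Finset.sum_nonneg fun i _ => mul_nonneg
    (by linarith [deg_sdeg_sq_le_one G i]) (sq_nonneg _)

lemma posSemidef_one_sub_Bmat : (1 - Bmat G).PosSemidef := by
  refine Matrix.PosSemidef.of_dotProduct_mulVec_nonneg ?_ ?_
  · rw [Matrix.IsHermitian, Matrix.conjTranspose_eq_transpose_of_trivial,
      Matrix.transpose_sub, Matrix.transpose_one, Bmat_transpose]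
  · intro x
    rw [star_trivial, sub_mulVec, dotProduct_sub, one_mulVec, quad_Bmat]
    have hL := (SimpleGraph.posSemidef_lapMatrix ℝ G).dotProduct_mulVec_nonneg (fun i => sdeg G i * x i)
    rw [star_trivial, SimpleGraph.lapMatrix, sub_mulVec, dotProduct_sub,
      SimpleGraph.dotProduct_mulVec_degMatrix] at hL
    have key := diag_split G x
    have hnn := diag_split_nonneg G x
    linarith

lemma posSemidef_one_add_Bmat : (1 + Bmat G).PosSemidef := by
  refine Matrix.PosSemidef.of_dotProduct_mulVec_nonneg ?_ ?_
  · rw [Matrix.IsHermitian, Matrix.conjTranspose_eq_transpose_of_trivial,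
      Matrix.transpose_add, Matrix.transpose_one, Bmat_transpose]
  · intro x
    rw [star_trivial, add_mulVec, dotProduct_add, one_mulVec, quad_Bmat]
    have hQ := (posSemidef_signless G).dotProduct_mulVec_nonneg (fun i => sdeg G i * x i)
    rw [star_trivial, add_mulVec, dotProduct_add,
      SimpleGraph.dotProduct_mulVec_degMatrix] at hQ
    have key := diag_split G x
    have hnn := diag_split_nonneg G x
    linarith

lemma abs_eigenvalues_Bmat_le_one (i : Fin n) :
    |(Bmat_isHermitian G).eigenvalues i| ≤ 1 := by
  set v : Fin n → ℝ := ⇑((Bmat_isHermitian G).eigenvectorBasis i) with hvdef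
  have hmv : Bmat G *ᵥ v = (Bmat_isHermitian G).eigenvalues i • v :=
    (Bmat_isHermitian G).mulVec_eigenvectorBasis i
  have hvv : v ⬝ᵥ v = 1 := by
    have h1 := (Bmat_isHermitian G).eigenvectorBasis.orthonormal.1 i
    have h2 : (inner ℝ ((Bmat_isHermitian G).eigenvectorBasis i)
        ((Bmat_isHermitian G).eigenvectorBasis i) : ℝ) = 1 := by
      rw [real_inner_self_eq_norm_sq, h1]; norm_num
    simpa only [PiLp.inner_apply, RCLike.inner_apply, conj_trivial, dotProduct, hvdef] using h2
  have h1 := (posSemidef_one_sub_Bmat G).dotProduct_mulVec_nonneg v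
  rw [star_trivial, sub_mulVec, one_mulVec, dotProduct_sub, hmv, dotProduct_smul,
    hvv, smul_eq_mul, mul_one] at h1
  have h2 := (posSemidef_one_add_Bmat G).dotProduct_mulVec_nonneg v
  rw [star_trivial, add_mulVec, one_mulVec, dotProduct_add, hmv, dotProduct_smul,
    hvv, smul_eq_mul, mul_one] at h2
  rw [abs_le]
  constructor <;> linarith

lemma conj_diag_mul {U : Matrix (Fin n) (Fin n) ℝ} (hU : star U * U = 1)
    (f g : Fin n → ℝ) :
    (U * Matrix.diagonal f * star U) * (U * Matrix.diagonal g * star U)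
      = U * Matrix.diagonal (fun i => f i * g i) * star U := by
  have h2 : ∀ X : Matrix (Fin n) (Fin n) ℝ, star U * (U * X) = X := fun X => by
    rw [← Matrix.mul_assoc, hU, Matrix.one_mul]
  simp only [Matrix.mul_assoc]
  rw [h2, ← Matrix.mul_assoc (Matrix.diagonal f), Matrix.diagonal_mul_diagonal]

lemma trace_conj_diag {U : Matrix (Fin n) (Fin n) ℝ} (hU : star U * U = 1)
    (f : Fin n → ℝ) :
    (U * Matrix.diagonal f * star U).trace = ∑ i, f i := by
  rw [Matrix.trace_mul_cycle, hU, Matrix.one_mul, Matrix.trace_diagonal]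

lemma two_randic' :
    ∑ i, ∑ j, (if G.Adj i j then ((G.degree i : ℝ) * (G.degree j : ℝ))⁻¹ else 0)
      = 2 * (∑ e ∈ G.edgeFinset,
        Sym2.lift ⟨fun i j => 1 / ((G.degree i : ℝ) * (G.degree j : ℝ)),
          fun i j => by simp [mul_comm]⟩ e) := by
  classical
  rw [← Finset.sum_product', ← Finset.sum_filter]
  have hmaps : ∀ p ∈ (Finset.univ ×ˢ Finset.univ).filter
      (fun p : Fin n × Fin n => G.Adj p.1 p.2), s(p.1, p.2) ∈ G.edgeFinset := by
    intro p hp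
    rw [Finset.mem_filter] at hp
    rw [SimpleGraph.mem_edgeFinset, SimpleGraph.mem_edgeSet]
    exact hp.2
  rw [← Finset.sum_fiberwise_of_maps_to hmaps
    (fun p : Fin n × Fin n => ((G.degree p.1 : ℝ) * (G.degree p.2 : ℝ))⁻¹)]
  rw [Finset.mul_sum]
  refine Finset.sum_congr rfl ?_
  intro e he
  induction e using Sym2.ind with
  | _ a b =>
    have hab : G.Adj a b := by rwa [SimpleGraph.mem_edgeFinset, SimpleGraph.mem_edgeSet] at he
    have hne : a ≠ b := hab.ne
    have hfiber : ((Finset.univ ×ˢ Finset.univ).filter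
        (fun p : Fin n × Fin n => G.Adj p.1 p.2)).filter
          (fun p => s(p.1, p.2) = s(a, b)) = {(a, b), (b, a)} := by
      ext ⟨i, j⟩
      simp only [Finset.mem_filter, Finset.mem_product, Finset.mem_univ, true_and,
        Finset.mem_insert, Finset.mem_singleton, Sym2.eq_iff, Prod.mk.injEq]
      constructor
      · rintro ⟨-, h⟩; exact h
      · rintro (⟨rfl, rfl⟩ | ⟨rfl, rfl⟩)
        · exact ⟨hab, Or.inl ⟨rfl, rfl⟩⟩
        · exact ⟨hab.symm, Or.inr ⟨rfl, rfl⟩⟩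
    rw [hfiber, Finset.sum_pair (by simp [Prod.ext_iff, hne, hne.symm]), Sym2.lift_mk]
    rw [mul_comm ((G.degree b : ℝ))]
    ring

open scoped MatrixOrder in
lemma matAbs_eq_of (B S : Matrix (Fin n) (Fin n) ℝ) (hS : S.PosSemidef)
    (hsq : S ^ 2 = B * Bᵀ) : matAbs B = S := by
  have hA : (B * Bᵀ).PosSemidef := Matrix.conjTranspose_eq_transpose_of_trivial B ▸
    Matrix.posSemidef_self_mul_conjTranspose B
  have h1 : matAbs B = hA.1.cfc Real.sqrt := by
    simp [matAbs, Matrix.IsHermitian.cfc]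
    rfl
  rw [h1, ← hA.1.cfc_eq, ← cfcₙ_eq_cfc (hf0 := Real.sqrt_zero),
    ← CFC.sqrt_eq_real_sqrt _ hA.nonneg]
  exact CFC.sqrt_unique (by rw [← sq]; exact hsq) hS.nonneg

end Stmt16Aux


open Stmt16Aux in
theorem stmt16 {n : ℕ} (G : SimpleGraph (Fin n)) [DecidableRel G.Adj]
    (hconn : G.Connected) :
    normLapEnergy G ≥ 2 * randicOne G := by
  classical
  have hH := Bmat_isHermitian G
  set U : Matrix (Fin n) (Fin n) ℝ := (hH.eigenvectorUnitary : Matrix (Fin n) (Fin n) ℝ) with hUdef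
  set μ : Fin n → ℝ := hH.eigenvalues with hmudef
  have hU : star U * U = 1 := Matrix.mem_unitaryGroup_iff'.mp hH.eigenvectorUnitary.2
  have spec : Bmat G = U * Matrix.diagonal μ * star U := by
    have h := hH.spectral_theorem
    exact h
  have hNB : normLap G - 1 = -(Bmat G) := by
    have h1 : normLap G = 1 - Bmat G := rfl
    rw [h1, sub_sub_cancel_left]
  set S : Matrix (Fin n) (Fin n) ℝ := U * Matrix.diagonal (fun i => |μ i|) * star U with hSdef
  have hS : S.PosSemidef :=
    Matrix.PosSemidef.mul_mul_conjTranspose_same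
      (Matrix.posSemidef_diagonal_iff.mpr fun i => abs_nonneg _) U
  have hBB : (Bmat G) * (Bmat G) = U * Matrix.diagonal (fun i => μ i * μ i) * star U := by
    rw [spec, conj_diag_mul hU]
  have hsq : S ^ 2 = (normLap G - 1) * (normLap G - 1)ᵀ := by
    rw [hNB, Matrix.transpose_neg, Matrix.neg_mul, Matrix.mul_neg, neg_neg, Bmat_transpose,
      hBB, pow_two, hSdef, conj_diag_mul hU]
    have : (fun i => |μ i| * |μ i|) = fun i => μ i * μ i := by
      funext i; exact abs_mul_abs_self _
    rw [this]
  have habs : matAbs (normLap G - 1) = S := by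
    exact matAbs_eq_of _ S hS hsq
  have htrS : S.trace = ∑ i, |μ i| := trace_conj_diag hU _
  have htrBB : ((Bmat G) * (Bmat G)).trace = ∑ i, μ i * μ i := by
    rw [hBB, trace_conj_diag hU]
  have htrBB' : ((Bmat G) * (Bmat G)).trace
      = ∑ i, ∑ j, (if G.Adj i j then ((G.degree i : ℝ) * (G.degree j : ℝ))⁻¹ else 0) := by
    simp only [Matrix.trace, Matrix.diag_apply, Matrix.mul_apply, Bmat_apply,
      SimpleGraph.adjMatrix_apply]
    refine Finset.sum_congr rfl fun i _ => Finset.sum_congr rfl fun j _ => ?_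
    by_cases h : G.Adj i j
    · have h' : G.Adj j i := h.symm
      rw [if_pos h, if_pos h', if_pos h, mul_inv]
      rw [← sdeg_sq, ← sdeg_sq]
      ring
    · have h' : ¬ G.Adj j i := fun hc => h hc.symm
      rw [if_neg h, if_neg h', if_neg h]
      ring
  have hrand : 2 * randicOne G
      = ∑ i, ∑ j, (if G.Adj i j then ((G.degree i : ℝ) * (G.degree j : ℝ))⁻¹ else 0) :=
    (two_randic' G).symm
  have hle : ∑ i, μ i * μ i ≤ ∑ i, |μ i| := by
    refine Finset.sum_le_sum fun i _ => ?_
    have h1 : |μ i| ≤ 1 := abs_eigenvalues_Bmat_le_one G i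
    have h2 : μ i * μ i = |μ i| * |μ i| := (abs_mul_abs_self _).symm
    rw [h2]
    calc |μ i| * |μ i| ≤ 1 * |μ i| :=
          mul_le_mul_of_nonneg_right h1 (abs_nonneg _)
      _ = |μ i| := one_mul _
  have : normLapEnergy G = ∑ i, |μ i| := by
    rw [normLapEnergy, habs, htrS]
  rw [this, hrand, ← htrBB', htrBB]
  exact hle
end
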